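/- arXiv:0707.0779 — 5 statements merged into one kernel-verified Lean document; each statement's English description precedes it below -/
import Mathlib

section
/- If f : gl(n,ℝ) → ℝ is differentiable and invariant under conjugation by GL(n,ℝ) (i.e. f(g x g⁻¹) = f(x) for all invertible g and all x), then its gradient with respect to the trace form commutes with the argument: [∇f(x), x] = 0 for all x. -/
attribute [local instance] Matrix.frobeniusNormedAddCommGroup Matrix.frobeniusNormedSpace
attribute [local instance] Matrix.frobeniusNormedRing Matrix.frobeniusNormedAlgebra

theorem gradient_commutes_of_invariant (n : ℕ)
    (f : Matrix (Fin n) (Fin n) ℝ → ℝ) (hf : Differentiable ℝ f)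
    (hinv : ∀ g : GL (Fin n) ℝ, ∀ x : Matrix (Fin n) (Fin n) ℝ,
      f ((g : Matrix (Fin n) (Fin n) ℝ) * x * ((g⁻¹ : GL (Fin n) ℝ) : Matrix (Fin n) (Fin n) ℝ)) = f x)
    (grad : Matrix (Fin n) (Fin n) ℝ → Matrix (Fin n) (Fin n) ℝ)
    (hgrad : ∀ x y : Matrix (Fin n) (Fin n) ℝ,
      Matrix.trace (grad x * y) = deriv (fun t : ℝ => f (x + t • y)) 0) :
    ∀ x : Matrix (Fin n) (Fin n) ℝ, grad x * x - x * grad x = 0 := by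
  intro x
  -- Step 1: trace (grad x * y) = fderiv ℝ f x y
  have key : ∀ y : Matrix (Fin n) (Fin n) ℝ,
      Matrix.trace (grad x * y) = fderiv ℝ f x y := by
    intro y
    rw [hgrad]
    have h1 : HasDerivAt (fun t : ℝ => x + t • y) y 0 := by
      have := ((hasDerivAt_id (0:ℝ)).smul_const y).const_add x
      simp only [id, one_smul] at this
      exact this
    have h2 : HasDerivAt (fun t : ℝ => f (x + t • y)) (fderiv ℝ f x y) 0 := by
      have := (hf (x + (0:ℝ) • y)).hasFDerivAt.comp_hasDerivAt 0 h1
      simp only [zero_smul, add_zero] at this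
      exact this
    exact h2.deriv
  -- Step 2: directional derivative vanishes along commutators
  have main : ∀ a : Matrix (Fin n) (Fin n) ℝ, fderiv ℝ f x (a * x - x * a) = 0 := by
    intro a
    set u : ℝ → Matrix (Fin n) (Fin n) ℝ := fun t => 1 + t • a with hu_def
    have hu : HasDerivAt u a 0 := by
      have := ((hasDerivAt_id (0:ℝ)).smul_const a).const_add (1 : Matrix (Fin n) (Fin n) ℝ)
      simp only [id, one_smul] at this
      exact this
    have hu0 : u 0 = 1 := by simp [hu_def]
    have hv : HasDerivAt (fun t => Ring.inverse (u t)) (-a) 0 := by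
      have h := hasFDerivAt_ringInverse (𝕜 := ℝ) (1 : (Matrix (Fin n) (Fin n) ℝ)ˣ)
      rw [show ((1 : (Matrix (Fin n) (Fin n) ℝ)ˣ) : Matrix (Fin n) (Fin n) ℝ) = u 0 from by
        simp [hu0]] at h
      have := h.comp_hasDerivAt 0 hu
      simp at this
      exact this
    -- the conjugation curve
    have hc : HasDerivAt (fun t => u t * x * Ring.inverse (u t)) (a * x - x * a) 0 := by
      have := (hu.mul_const x).mul hv
      simp only [hu0, Ring.inverse_one, mul_one, one_mul, mul_neg, sub_eq_add_neg] at this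
      exact this
    have hfc : HasDerivAt (fun t => f (u t * x * Ring.inverse (u t)))
        (fderiv ℝ f x (a * x - x * a)) 0 := by
      have := (hf (u 0 * x * Ring.inverse (u 0))).hasFDerivAt.comp_hasDerivAt 0 hc
      simp only [hu0, one_mul, Ring.inverse_one, mul_one] at this
      exact this
    -- the curve is locally constant
    have hconst : (fun t => f (u t * x * Ring.inverse (u t))) =ᶠ[nhds (0:ℝ)] fun _ => f x := by
      have hopen : IsOpen {y : Matrix (Fin n) (Fin n) ℝ | IsUnit y} := Units.isOpen
      have hcont : Continuous u := by
        fun_prop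
      have hmem : {t : ℝ | IsUnit (u t)} ∈ nhds (0:ℝ) := by
        refine (hopen.preimage hcont).mem_nhds ?_
        simp [hu0]
      filter_upwards [hmem] with t ht
      obtain ⟨w, hw⟩ := ht
      have : f ((w : Matrix (Fin n) (Fin n) ℝ) * x * ((w⁻¹ : (Matrix (Fin n) (Fin n) ℝ)ˣ) : Matrix (Fin n) (Fin n) ℝ)) = f x :=
        hinv w x
      rw [← hw, Ring.inverse_unit]; exact this
    have hzero : HasDerivAt (fun t => f (u t * x * Ring.inverse (u t))) 0 0 :=
      (hasDerivAt_const (0:ℝ) (f x)).congr_of_eventuallyEq hconst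
    have := hfc.unique hzero
    exact this
  -- Step 3: conclude via nondegeneracy of the trace form
  set N := x * grad x - grad x * x with hN
  have htr : ∀ a : Matrix (Fin n) (Fin n) ℝ, Matrix.trace (N * a) = 0 := by
    intro a
    have h1 : Matrix.trace (grad x * (a * x - x * a)) = 0 := by
      rw [key, main]
    have h2 : Matrix.trace (N * a) = Matrix.trace (grad x * (a * x - x * a)) := by
      simp only [hN, Matrix.sub_mul, Matrix.mul_sub, Matrix.trace_sub, mul_assoc]
      rw [Matrix.trace_mul_comm x (grad x * a), mul_assoc]
    exact h2.trans h1
  have hNzero : N = 0 := by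
    have h := htr N.transpose
    have hsum : ∑ i, ∑ j, N i j * N i j = 0 := by
      simpa [Matrix.trace, Matrix.mul_apply, Matrix.diag, Matrix.transpose_apply] using h
    ext i j
    have hnn : ∀ i ∈ (Finset.univ : Finset (Fin n)), (0:ℝ) ≤ ∑ j, N i j * N i j :=
      fun i _ => Finset.sum_nonneg fun j _ => mul_self_nonneg _
    have h1 := (Finset.sum_eq_zero_iff_of_nonneg hnn).mp hsum i (Finset.mem_univ i)
    have h2 := (Finset.sum_eq_zero_iff_of_nonneg
      (fun j _ => mul_self_nonneg (N i j))).mp h1 j (Finset.mem_univ j)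
    simpa using mul_self_eq_zero.mp h2
  have heq : grad x * x - x * grad x = -N := by rw [hN, neg_sub]
  rw [heq, hNzero, neg_zero]
end

section
/- Let P be the subgroup of GL(n,ℝ) of invertible matrices whose last row is (0,…,0,1). For every y ∈ P and every x ∈ gl(n,ℝ), one has D(y x y⁻¹) = (det y)⁻¹ · D(x), where D(x) is the determinant of the matrix with rows e_n, e_n x, …, e_n x^{n-1}. In particular, the zero set of D is invariant under conjugation by P. -/
noncomputable def Dmat (n : ℕ) (x : Matrix (Fin (n+1)) (Fin (n+1)) ℝ) : ℝ :=
  (Matrix.of fun k j : Fin (n+1) =>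
    Matrix.vecMul (Pi.single (Fin.last n) 1) (x ^ (k : ℕ)) j).det

theorem Dmat_conj_P (n : ℕ) (y : GL (Fin (n+1)) ℝ)
    (hy : (y : Matrix (Fin (n+1)) (Fin (n+1)) ℝ) (Fin.last n) = Pi.single (Fin.last n) 1)
    (x : Matrix (Fin (n+1)) (Fin (n+1)) ℝ) :
    Dmat n ((y : Matrix (Fin (n+1)) (Fin (n+1)) ℝ) * x *
        ((y⁻¹ : GL (Fin (n+1)) ℝ) : Matrix (Fin (n+1)) (Fin (n+1)) ℝ)) =
      ((y : Matrix (Fin (n+1)) (Fin (n+1)) ℝ).det)⁻¹ * Dmat n x ∧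
    (Dmat n x = 0 →
      Dmat n ((y : Matrix (Fin (n+1)) (Fin (n+1)) ℝ) * x *
        ((y⁻¹ : GL (Fin (n+1)) ℝ) : Matrix (Fin (n+1)) (Fin (n+1)) ℝ)) = 0) := by
  set Y : Matrix (Fin (n+1)) (Fin (n+1)) ℝ := (y : Matrix (Fin (n+1)) (Fin (n+1)) ℝ)
  set Yi : Matrix (Fin (n+1)) (Fin (n+1)) ℝ := ((y⁻¹ : GL (Fin (n+1)) ℝ) : Matrix (Fin (n+1)) (Fin (n+1)) ℝ)
  have key : Dmat n (Y * x * Yi) = (Y.det)⁻¹ * Dmat n x := by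
    have hM : (Matrix.of fun k j : Fin (n+1) =>
        Matrix.vecMul (Pi.single (Fin.last n) 1) ((Y * x * Yi) ^ (k : ℕ)) j)
        = (Matrix.of fun k j : Fin (n+1) =>
            Matrix.vecMul (Pi.single (Fin.last n) 1) (x ^ (k : ℕ)) j) * Yi := by
      ext k j
      have hconj : (Y * x * Yi) ^ (k : ℕ) = Y * x ^ (k : ℕ) * Yi :=
        Units.conj_pow y x (k : ℕ)
      simp only [Matrix.of_apply, Matrix.mul_apply]
      rw [hconj]
      have : Matrix.vecMul (Pi.single (Fin.last n) 1) (Y * x ^ (k : ℕ) * Yi)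
          = Matrix.vecMul (Matrix.vecMul (Pi.single (Fin.last n) 1) (x ^ (k : ℕ))) Yi := by
        rw [← Matrix.vecMul_vecMul, ← Matrix.vecMul_vecMul, Matrix.single_one_vecMul]
        exact congrArg (fun v => Matrix.vecMul (Matrix.vecMul v (x ^ (k : ℕ))) Yi) hy
      rw [this]
      rfl
    have hdetYi : Yi.det = (Y.det)⁻¹ := by
      have h1 : Y * Yi = 1 := y.mul_inv
      have : Y.det * Yi.det = 1 := by
        rw [← Matrix.det_mul, h1, Matrix.det_one]
      exact eq_inv_of_mul_eq_one_right (by linarith [mul_comm Y.det Yi.det])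
    unfold Dmat
    rw [hM, Matrix.det_mul, hdetYi, mul_comm]
  exact ⟨key, fun h => by rw [key, h, mul_zero]⟩
end

section
/- If x is an n×n real matrix with D(x) ≠ 0, then the centralizer of x in gl(n,ℝ) equals the span of I, x, x², …, x^{n-1}, i.e. the algebra ℝ[x] of polynomials in x, which has dimension n. -/
private lemma vecMul_smul_right {m : ℕ} (v : Fin m → ℝ) (a : ℝ)
    (A : Matrix (Fin m) (Fin m) ℝ) :
    Matrix.vecMul v (a • A) = a • Matrix.vecMul v A := by
  funext j
  simp [Matrix.vecMul, dotProduct, Finset.mul_sum, mul_comm, mul_left_comm]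

theorem centralizer_eq_polynomials (n : ℕ) (x : Matrix (Fin (n+1)) (Fin (n+1)) ℝ)
    (h : Dmat n x ≠ 0) :
    (∀ y : Matrix (Fin (n+1)) (Fin (n+1)) ℝ, x * y = y * x ↔
      y ∈ Submodule.span ℝ (Set.range fun k : Fin (n+1) => x ^ (k : ℕ))) ∧
    Module.finrank ℝ (Submodule.span ℝ (Set.range fun k : Fin (n+1) => x ^ (k : ℕ))) = n + 1 := by
  classical
  set e : Fin (n+1) → ℝ := Pi.single (Fin.last n) 1 with he
  set M : Matrix (Fin (n+1)) (Fin (n+1)) ℝ :=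
    Matrix.of fun k j : Fin (n+1) => Matrix.vecMul e (x ^ (k : ℕ)) j with hM
  have hdet : IsUnit M.det := isUnit_iff_ne_zero.mpr h
  have hinv : M⁻¹ * M = 1 := Matrix.nonsing_inv_mul M hdet
  have hinv' : M * M⁻¹ = 1 := Matrix.mul_nonsing_inv M hdet
  -- key computation: vecMul c M = vecMul e (∑ c k • x^k)
  have key : ∀ c : Fin (n+1) → ℝ,
      Matrix.vecMul c M = Matrix.vecMul e (∑ k : Fin (n+1), c k • x ^ (k : ℕ)) := by
    intro c
    funext j
    have hA : ∀ t, (∑ k : Fin (n+1), c k • x ^ (k : ℕ)) t j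
        = ∑ k : Fin (n+1), c k * (x ^ (k : ℕ)) t j := by
      intro t
      simp [Matrix.sum_apply, Matrix.smul_apply, smul_eq_mul]
    simp only [Matrix.vecMul, dotProduct, hM, Matrix.of_apply, hA, Finset.mul_sum]
    rw [Finset.sum_comm]
    exact Finset.sum_congr rfl fun t _ => Finset.sum_congr rfl fun k _ => by ring
  -- linear independence of powers
  have hli : LinearIndependent ℝ (fun k : Fin (n+1) => x ^ (k : ℕ)) := by
    rw [Fintype.linearIndependent_iff]
    intro c hc i
    have h0 : Matrix.vecMul c M = 0 := by
      rw [key, hc, Matrix.vecMul_zero]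
    have := congrArg (fun v => Matrix.vecMul v M⁻¹) h0
    simpa [Matrix.vecMul_vecMul, hinv'] using congrFun this i
  have hfr : Module.finrank ℝ
      (Submodule.span ℝ (Set.range fun k : Fin (n+1) => x ^ (k : ℕ))) = n + 1 := by
    simpa using finrank_span_eq_card hli
  refine ⟨fun y => ⟨fun hxy => ?_, fun hy => ?_⟩, hfr⟩
  · -- commuting y is a polynomial in x
    set c : Fin (n+1) → ℝ := Matrix.vecMul (Matrix.vecMul e y) M⁻¹ with hc
    set p : Matrix (Fin (n+1)) (Fin (n+1)) ℝ := ∑ k : Fin (n+1), c k • x ^ (k : ℕ) with hp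
    have hep : Matrix.vecMul e y = Matrix.vecMul e p := by
      rw [← key c, hc, Matrix.vecMul_vecMul, hinv, Matrix.vecMul_one]
    have hcomm : ∀ m : ℕ, y * x ^ m = x ^ m * y := fun m =>
      Commute.pow_right (hxy.symm) m
    have hpcomm : ∀ m : ℕ, p * x ^ m = x ^ m * p := by
      intro m
      rw [hp, Finset.sum_mul, Finset.mul_sum]
      refine Finset.sum_congr rfl fun k _ => ?_
      rw [Matrix.smul_mul, Matrix.mul_smul, ← pow_add, ← pow_add, Nat.add_comm (k : ℕ) m]
    have hMy : M * y = M * p := by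
      ext k j
      have h1 : (M * y) k j = Matrix.vecMul (Matrix.vecMul e (x ^ (k : ℕ))) y j := by
        simp [Matrix.mul_apply, Matrix.vecMul, dotProduct, hM]
      have h2 : (M * p) k j = Matrix.vecMul (Matrix.vecMul e (x ^ (k : ℕ))) p j := by
        simp [Matrix.mul_apply, Matrix.vecMul, dotProduct, hM]
      rw [h1, h2]
      calc Matrix.vecMul (Matrix.vecMul e (x ^ (k : ℕ))) y j
          = Matrix.vecMul e (x ^ (k : ℕ) * y) j := by rw [Matrix.vecMul_vecMul]
        _ = Matrix.vecMul e (y * x ^ (k : ℕ)) j := by rw [hcomm]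
        _ = Matrix.vecMul (Matrix.vecMul e y) (x ^ (k : ℕ)) j := by
              rw [Matrix.vecMul_vecMul]
        _ = Matrix.vecMul (Matrix.vecMul e p) (x ^ (k : ℕ)) j := by rw [hep]
        _ = Matrix.vecMul e (p * x ^ (k : ℕ)) j := by rw [Matrix.vecMul_vecMul]
        _ = Matrix.vecMul e (x ^ (k : ℕ) * p) j := by rw [hpcomm]
        _ = Matrix.vecMul (Matrix.vecMul e (x ^ (k : ℕ))) p j := by
              rw [Matrix.vecMul_vecMul]
    have hyp : y = p := by
      calc y = (M⁻¹ * M) * y := by rw [hinv, Matrix.one_mul]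
        _ = M⁻¹ * (M * y) := by rw [Matrix.mul_assoc]
        _ = M⁻¹ * (M * p) := by rw [hMy]
        _ = (M⁻¹ * M) * p := by rw [Matrix.mul_assoc]
        _ = p := by rw [hinv, Matrix.one_mul]
    rw [hyp, hp]
    exact Submodule.sum_mem _ fun k _ =>
      Submodule.smul_mem _ _ (Submodule.subset_span ⟨k, rfl⟩)
  · -- elements of the span commute with x
    induction hy using Submodule.span_induction with
    | mem z hz =>
      obtain ⟨k, rfl⟩ := hz
      exact (Commute.pow_right rfl (k : ℕ))
    | zero => simp
    | add a b _ _ ha hb => rw [Matrix.mul_add, Matrix.add_mul, ha, hb]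
    | smul r a _ ha => rw [Matrix.mul_smul, Matrix.smul_mul, ha]
end

section
/- Every regular element of gl(n,ℝ) is conjugate under GL(n,ℝ) to an element x with D(x) ≠ 0. Hence the saturation of the open set Ω = {x : D(x) ≠ 0} under the adjoint (conjugation) action of GL(n,ℝ) is exactly the set of regular elements of gl(n,ℝ). -/
open Polynomial Matrix

variable {n : ℕ}

/-- Annihilator ideal of a row vector `w` under right multiplication by polynomials in `x`. -/
noncomputable def annv (x : Matrix (Fin (n+1)) (Fin (n+1)) ℝ) (w : Fin (n+1) → ℝ) : Ideal (Polynomial ℝ) where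
  carrier := {p | Matrix.vecMul w (Polynomial.aeval x p) = 0}
  zero_mem' := by simp
  add_mem' := by
    intro a b ha hb
    simp only [Set.mem_setOf_eq, map_add, Matrix.vecMul_add] at *
    rw [ha, hb, add_zero]
  smul_mem' := by
    intro c p hp
    simp only [Set.mem_setOf_eq, smul_eq_mul] at *
    rw [mul_comm, _root_.map_mul, ← Matrix.vecMul_vecMul, hp, Matrix.zero_vecMul]

lemma mem_annv {x : Matrix (Fin (n+1)) (Fin (n+1)) ℝ} {w : Fin (n+1) → ℝ} {p : Polynomial ℝ} :
    p ∈ annv x w ↔ Matrix.vecMul w (Polynomial.aeval x p) = 0 := Iff.rfl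

lemma annv_add_of_coprime {x : Matrix (Fin (n+1)) (Fin (n+1)) ℝ} {w₁ w₂ : Fin (n+1) → ℝ}
    {q₁ q₂ : Polynomial ℝ}
    (h₁ : annv x w₁ = Ideal.span {q₁}) (h₂ : annv x w₂ = Ideal.span {q₂})
    (hco : IsCoprime q₁ q₂) :
    annv x (w₁ + w₂) = Ideal.span {q₁ * q₂} := by
  have hq₁ : q₁ ∈ annv x w₁ := h₁ ▸ Ideal.mem_span_singleton_self q₁
  have hq₂ : q₂ ∈ annv x w₂ := h₂ ▸ Ideal.mem_span_singleton_self q₂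
  apply le_antisymm
  · intro r hr
    rw [mem_annv] at hr
    have hr1 : q₁ ∣ r := by
      have m1 : r * q₂ ∈ annv x w₁ := by
        rw [mem_annv]
        have a2 : Matrix.vecMul w₂ (Polynomial.aeval x (r * q₂)) = 0 := by
          have : q₂ * r ∈ annv x w₂ := Ideal.mul_mem_right _ _ hq₂
          rw [mem_annv] at this; rwa [mul_comm] at this
        have a12 : Matrix.vecMul (w₁ + w₂) (Polynomial.aeval x (r * q₂)) = 0 := by
          rw [_root_.map_mul, ← Matrix.vecMul_vecMul]
          have : Matrix.vecMul (w₁ + w₂) (Polynomial.aeval x r) = 0 := hr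
          rw [this, Matrix.zero_vecMul]
        rw [Matrix.add_vecMul] at a12
        rw [a2, add_zero] at a12
        exact a12
      rw [h₁, Ideal.mem_span_singleton] at m1
      exact hco.dvd_of_dvd_mul_right m1
    have hr2 : q₂ ∣ r := by
      have m2 : r * q₁ ∈ annv x w₂ := by
        rw [mem_annv]
        have a1 : Matrix.vecMul w₁ (Polynomial.aeval x (r * q₁)) = 0 := by
          have : q₁ * r ∈ annv x w₁ := Ideal.mul_mem_right _ _ hq₁
          rw [mem_annv] at this; rwa [mul_comm] at this
        have a12 : Matrix.vecMul (w₁ + w₂) (Polynomial.aeval x (r * q₁)) = 0 := by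
          rw [_root_.map_mul, ← Matrix.vecMul_vecMul]
          have : Matrix.vecMul (w₁ + w₂) (Polynomial.aeval x r) = 0 := hr
          rw [this, Matrix.zero_vecMul]
        rw [Matrix.add_vecMul] at a12
        rw [a1, zero_add] at a12
        exact a12
      rw [h₂, Ideal.mem_span_singleton] at m2
      exact hco.symm.dvd_of_dvd_mul_right m2
    rw [Ideal.mem_span_singleton]
    exact hco.mul_dvd hr1 hr2
  · intro r hr
    rw [Ideal.mem_span_singleton] at hr
    obtain ⟨s, rfl⟩ := hr
    rw [mem_annv, Matrix.add_vecMul]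
    have e1 : q₁ * q₂ * s ∈ annv x w₁ := by
      rw [mul_assoc]; exact Ideal.mul_mem_right _ _ hq₁
    have e2 : q₁ * q₂ * s ∈ annv x w₂ := by
      have : q₂ * (q₁ * s) ∈ annv x w₂ := Ideal.mul_mem_right _ _ hq₂
      rwa [show q₂ * (q₁ * s) = q₁ * q₂ * s by ring] at this
    rw [mem_annv] at e1 e2
    rw [e1, e2, add_zero]

lemma matrix_isIntegral (x : Matrix (Fin (n+1)) (Fin (n+1)) ℝ) : IsIntegral ℝ x :=
  ⟨x.charpoly, x.charpoly_monic, x.aeval_self_charpoly⟩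

lemma exists_annv_span_pow (x : Matrix (Fin (n+1)) (Fin (n+1)) ℝ) {p : Polynomial ℝ}
    (hp : Prime p) {k : ℕ} (hk : 1 ≤ k) {s : Polynomial ℝ}
    (hm : minpoly ℝ x = p ^ k * s) (hps : ¬ p ∣ s) :
    ∃ w : Fin (n+1) → ℝ, annv x w = Ideal.span {p ^ k} := by
  have hmin0 : minpoly ℝ x ≠ 0 := minpoly.ne_zero (matrix_isIntegral x)
  have hs0 : s ≠ 0 := by rintro rfl; simp [hm] at hmin0
  have hq : Polynomial.aeval x (p ^ (k-1) * s) ≠ 0 := by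
    intro h0
    have hdvd : minpoly ℝ x ∣ p ^ (k-1) * s := minpoly.dvd ℝ x h0
    rw [hm] at hdvd
    have : p ^ k * s ∣ p ^ (k-1) * s := hdvd
    rw [mul_comm (p ^ k) s, mul_comm (p ^ (k-1)) s] at this
    have h2 : p ^ k ∣ p ^ (k-1) := (mul_dvd_mul_iff_left hs0).mp this
    have := (pow_dvd_pow_iff hp.ne_zero hp.not_unit).mp h2
    omega
  obtain ⟨i, j, hij⟩ : ∃ i j, Polynomial.aeval x (p ^ (k-1) * s) i j ≠ 0 := by
    by_contra h
    push_neg at h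
    exact hq (by ext i j; exact h i j)
  set v : Fin (n+1) → ℝ := Pi.single i 1 with hv
  set w := Matrix.vecMul v (Polynomial.aeval x s) with hw
  have key : ∀ t : Polynomial ℝ,
      Matrix.vecMul w (Polynomial.aeval x t) = Matrix.vecMul v (Polynomial.aeval x (s * t)) := by
    intro t
    rw [hw, Matrix.vecMul_vecMul, ← _root_.map_mul]
  have h1 : p ^ k ∈ annv x w := by
    rw [mem_annv, key, show s * p ^ k = p ^ k * s from mul_comm _ _, ← hm, minpoly.aeval,
      Matrix.vecMul_zero]
  have h2 : p ^ (k-1) ∉ annv x w := by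
    rw [mem_annv, key, show s * p ^ (k-1) = p ^ (k-1) * s from mul_comm _ _]
    intro h0
    apply hij
    have := congrFun h0 j
    rwa [hv, Matrix.single_one_vecMul] at this
  set g := Submodule.IsPrincipal.generator (annv x w) with hg
  have hgen : Ideal.span {g} = annv x w := Ideal.span_singleton_generator _
  have hdvd : g ∣ p ^ k := by
    rw [← Ideal.mem_span_singleton, hgen]; exact h1
  obtain ⟨m, hmk, hassoc⟩ := (dvd_prime_pow hp k).mp hdvd
  have hm_eq : m = k := by
    by_contra hne
    apply h2
    rw [← hgen, Ideal.mem_span_singleton]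
    exact hassoc.dvd.trans (pow_dvd_pow p (by omega))
  use w
  rw [← hgen]
  exact Ideal.span_singleton_eq_span_singleton.mpr (hm_eq ▸ hassoc)

open UniqueFactorizationMonoid in
lemma exists_annv_span_minpoly (x : Matrix (Fin (n+1)) (Fin (n+1)) ℝ) :
    ∃ w : Fin (n+1) → ℝ, annv x w = Ideal.span {minpoly ℝ x} := by
  classical
  set m := minpoly ℝ x with hmdef
  have hmin0 : m ≠ 0 := minpoly.ne_zero (matrix_isIntegral x)
  set F := normalizedFactors m with hF
  have main : ∀ S : Finset (Polynomial ℝ), ↑S ⊆ F.toFinset →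
      ∃ w : Fin (n+1) → ℝ, annv x w = Ideal.span {∏ p ∈ S, p ^ F.count p} := by
    intro S
    induction S using Finset.induction_on with
    | empty =>
      intro _
      refine ⟨0, ?_⟩
      rw [Finset.prod_empty, Ideal.span_singleton_one]
      ext r
      simp [mem_annv, Matrix.zero_vecMul]
    | @insert p S hpS IH =>
      intro hsub
      have hpF : p ∈ F := by
        rw [← Multiset.mem_toFinset]
        exact hsub (Finset.mem_insert_self p S)
      have hSsub : ↑S ⊆ F.toFinset := fun q hq => hsub (Finset.mem_insert_of_mem hq)
      have hp : Prime p := prime_of_normalized_factor p hpF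
      have hnorm : normalize p = p := normalize_normalized_factor p hpF
      set k := F.count p with hk
      have hk1 : 1 ≤ k := Multiset.count_pos.mpr hpF
      have hdvd : p ^ k ∣ m := by
        have hle : Multiset.replicate k p ≤ F := Multiset.le_count_iff_replicate_le.mp le_rfl
        have := Multiset.prod_dvd_prod_of_le hle
        rw [Multiset.prod_replicate] at this
        exact this.trans (prod_normalizedFactors hmin0).dvd
      obtain ⟨s, hs⟩ := hdvd
      have hps : ¬ p ∣ s := by
        intro ⟨t, ht⟩
        have hd2 : p ^ (k+1) ∣ m := ⟨t, by rw [hs, ht]; ring⟩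
        have := (pow_dvd_iff_le_emultiplicity).mpr
          (le_of_eq (emultiplicity_eq_count_normalizedFactors hp.irreducible hmin0).symm)
        rw [hnorm] at this
        have h2 := emultiplicity_eq_count_normalizedFactors hp.irreducible hmin0
        rw [hnorm, ← hF, ← hk] at h2
        have := pow_dvd_iff_le_emultiplicity.mp hd2
        rw [h2] at this
        exact absurd (by exact_mod_cast this) (by omega)
      obtain ⟨w₁, hw₁⟩ := exists_annv_span_pow x hp hk1 hs hps
      obtain ⟨w₂, hw₂⟩ := IH hSsub
      have hnd : ¬ p ∣ ∏ q ∈ S, q ^ F.count q := by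
        intro hdvd
        obtain ⟨q, hqS, hpq⟩ := hp.exists_mem_finset_dvd hdvd
        have hq : Prime q := prime_of_normalized_factor q
          (Multiset.mem_toFinset.mp (hSsub hqS))
        have hqnorm : normalize q = q := normalize_normalized_factor q
          (Multiset.mem_toFinset.mp (hSsub hqS))
        have hpq' : p ∣ q := hp.dvd_of_dvd_pow hpq
        have hassoc : Associated p q := hp.irreducible.associated_of_dvd hq.irreducible hpq'
        have : p = q := by
          rw [← hnorm, ← hqnorm]
          exact normalize_eq_normalize hassoc.dvd hassoc.symm.dvd
        exact hpS (this ▸ hqS)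
      have hco : IsCoprime (p ^ k) (∏ q ∈ S, q ^ F.count q) :=
        ((hp.irreducible.coprime_iff_not_dvd).mpr hnd).pow_left
      refine ⟨w₁ + w₂, ?_⟩
      rw [annv_add_of_coprime hw₁ hw₂ hco, Finset.prod_insert hpS]
  obtain ⟨w, hw⟩ := main F.toFinset (by simp)
  refine ⟨w, ?_⟩
  rw [hw]
  apply Ideal.span_singleton_eq_span_singleton.mpr
  rw [← Finset.prod_multiset_count F]
  exact prod_normalizedFactors hmin0

lemma vecMul_eq_sum_smul (c : Fin (n+1) → ℝ) (M : Matrix (Fin (n+1)) (Fin (n+1)) ℝ) :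
    Matrix.vecMul c M = ∑ k, c k • M k := by
  ext j
  simp [Matrix.vecMul, dotProduct, Finset.sum_apply]

lemma vecMul_smul_matrix (w : Fin (n+1) → ℝ) (b : ℝ) (M : Matrix (Fin (n+1)) (Fin (n+1)) ℝ) :
    Matrix.vecMul w (b • M) = b • Matrix.vecMul w M := by
  ext j
  simp [Matrix.vecMul, dotProduct, Finset.mul_sum, mul_left_comm]

lemma vecMul_sum_matrix {ι : Type*} (s : Finset ι) (w : Fin (n+1) → ℝ)
    (f : ι → Matrix (Fin (n+1)) (Fin (n+1)) ℝ) :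
    Matrix.vecMul w (∑ i ∈ s, f i) = ∑ i ∈ s, Matrix.vecMul w (f i) := by
  classical
  induction s using Finset.induction_on with
  | empty => simp
  | @insert a s ha ih =>
    rw [Finset.sum_insert ha, Finset.sum_insert ha, Matrix.vecMul_add, ih]

lemma det_eq_zero_of_small_ann {x : Matrix (Fin (n+1)) (Fin (n+1)) ℝ} {w : Fin (n+1) → ℝ}
    {p : Polynomial ℝ} (hp : p ∈ annv x w) (hp0 : p ≠ 0) (hdeg : p.natDegree ≤ n) :
    (Matrix.of fun k j : Fin (n+1) => Matrix.vecMul w (x ^ (k : ℕ)) j).det = 0 := by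
  rw [← Matrix.exists_vecMul_eq_zero_iff]
  refine ⟨fun k => p.coeff (k : ℕ), ?_, ?_⟩
  · intro h0
    have := congrFun h0 ⟨p.natDegree, by omega⟩
    simp only [Pi.zero_apply] at this
    exact hp0 (Polynomial.leadingCoeff_eq_zero.mp this)
  · rw [vecMul_eq_sum_smul]
    have hsum : ∑ k : Fin (n+1), p.coeff (k : ℕ) •
        (Matrix.of fun k j : Fin (n+1) => Matrix.vecMul w (x ^ (k : ℕ)) j) k
        = Matrix.vecMul w (Polynomial.aeval x p) := by
      have hA : Polynomial.aeval x p = ∑ k : Fin (n+1), p.coeff (k : ℕ) • x ^ (k : ℕ) := by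
        rw [Polynomial.aeval_eq_sum_range' (show p.natDegree < n + 1 by omega),
          ← Fin.sum_univ_eq_sum_range]
      rw [hA, vecMul_sum_matrix]
      refine Finset.sum_congr rfl fun k _ => ?_
      rw [vecMul_smul_matrix]
      rfl
    rw [hsum, mem_annv.mp hp]

lemma det_ne_zero_of_big_ann {x : Matrix (Fin (n+1)) (Fin (n+1)) ℝ} {w : Fin (n+1) → ℝ}
    (hann : ∀ p ∈ annv x w, p ≠ 0 → n + 1 ≤ p.natDegree) :
    (Matrix.of fun k j : Fin (n+1) => Matrix.vecMul w (x ^ (k : ℕ)) j).det ≠ 0 := by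
  intro hdet
  obtain ⟨c, hc0, hcN⟩ := Matrix.exists_vecMul_eq_zero_iff.mpr hdet
  set p := ∑ k : Fin (n+1), Polynomial.monomial (k : ℕ) (c k) with hpdef
  have hA : Polynomial.aeval x p = ∑ k : Fin (n+1), c k • x ^ (k : ℕ) := by
    rw [hpdef, map_sum]
    exact Finset.sum_congr rfl fun k _ => by
      rw [Polynomial.aeval_monomial, ← Algebra.smul_def]
  have hp : p ∈ annv x w := by
    rw [mem_annv, hA, vecMul_sum_matrix]
    rw [vecMul_eq_sum_smul] at hcN
    rw [← hcN]
    exact Finset.sum_congr rfl fun k _ => by rw [vecMul_smul_matrix]; rfl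
  have hpne : p ≠ 0 := by
    obtain ⟨k0, hk0⟩ := Function.ne_iff.mp hc0
    intro h0
    apply hk0
    have hcoeff : p.coeff (k0 : ℕ) = c k0 := by
      rw [hpdef, Polynomial.finset_sum_coeff]
      rw [Finset.sum_eq_single k0]
      · rw [Polynomial.coeff_monomial, if_pos rfl]
      · intro k _ hk
        rw [Polynomial.coeff_monomial, if_neg (fun h => hk (Fin.val_inj.mp h))]
      · intro h; exact absurd (Finset.mem_univ k0) h
    rw [h0, Polynomial.coeff_zero] at hcoeff
    exact hcoeff.symm
  have hdeg : p.natDegree ≤ n := by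
    rw [hpdef]
    refine Polynomial.natDegree_sum_le_of_forall_le _ _ fun k _ => ?_
    exact le_trans (Polynomial.natDegree_monomial_le _) k.is_le
  have := hann p hp hpne
  omega


lemma mul_row {A B : Matrix (Fin (n+1)) (Fin (n+1)) ℝ} (i j : Fin (n+1)) :
    (A * B) i j = Matrix.vecMul (A i) B j := by
  simp [Matrix.mul_apply, Matrix.vecMul, dotProduct]

lemma dmat_conj (x : Matrix (Fin (n+1)) (Fin (n+1)) ℝ)
    (u : (Matrix (Fin (n+1)) (Fin (n+1)) ℝ)ˣ) :
    Dmat n ((↑u : Matrix (Fin (n+1)) (Fin (n+1)) ℝ) * x *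
        (↑u⁻¹ : Matrix (Fin (n+1)) (Fin (n+1)) ℝ)) =
      (Matrix.of fun k j : Fin (n+1) =>
        Matrix.vecMul (Matrix.vecMul (Pi.single (Fin.last n) 1) (↑u : Matrix _ _ ℝ))
          (x ^ (k : ℕ)) j).det * ((↑u⁻¹ : Matrix (Fin (n+1)) (Fin (n+1)) ℝ)).det := by
  rw [Dmat, ← Matrix.det_mul]
  congr 1
  ext k j
  rw [Matrix.of_apply, mul_row, Units.conj_pow u x (k : ℕ),
    ← Matrix.vecMul_vecMul, ← Matrix.vecMul_vecMul]
  rfl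

theorem saturation_of_Omega_eq_regular (n : ℕ) (x : Matrix (Fin (n+1)) (Fin (n+1)) ℝ) :
    (∃ g : GL (Fin (n+1)) ℝ,
      Dmat n ((g : Matrix (Fin (n+1)) (Fin (n+1)) ℝ) * x *
        ((g⁻¹ : GL (Fin (n+1)) ℝ) : Matrix (Fin (n+1)) (Fin (n+1)) ℝ)) ≠ 0) ↔
    minpoly ℝ x = Matrix.charpoly x := by
  have hcdeg : (Matrix.charpoly x).natDegree = n + 1 := by
    rw [Matrix.charpoly_natDegree_eq_dim, Fintype.card_fin]
  constructor
  · rintro ⟨g, hg⟩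
    rw [dmat_conj x g] at hg
    set w := Matrix.vecMul (Pi.single (Fin.last n) 1) (↑g : Matrix (Fin (n+1)) (Fin (n+1)) ℝ)
    have hdet : (Matrix.of fun k j : Fin (n+1) =>
        Matrix.vecMul w (x ^ (k : ℕ)) j).det ≠ 0 := fun h => hg (by rw [h, zero_mul])
    have hmem : minpoly ℝ x ∈ annv x w := by
      rw [mem_annv, minpoly.aeval, Matrix.vecMul_zero]
    have hmin0 : minpoly ℝ x ≠ 0 := minpoly.ne_zero (matrix_isIntegral x)
    have hdeg : n + 1 ≤ (minpoly ℝ x).natDegree := by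
      by_contra hlt
      exact hdet (det_eq_zero_of_small_ann hmem hmin0 (by omega))
    exact Polynomial.eq_of_dvd_of_natDegree_le_of_leadingCoeff
      (Matrix.minpoly_dvd_charpoly x) (by omega)
      (by rw [(minpoly.monic (matrix_isIntegral x)).leadingCoeff,
        (Matrix.charpoly_monic x).leadingCoeff])
  · intro h
    have hmdeg : (minpoly ℝ x).natDegree = n + 1 := by rw [h]; exact hcdeg
    obtain ⟨w, hw⟩ := exists_annv_span_minpoly x
    have hann : ∀ p ∈ annv x w, p ≠ 0 → n + 1 ≤ p.natDegree := by
      intro p hp hp0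
      rw [hw, Ideal.mem_span_singleton] at hp
      have := Polynomial.natDegree_le_of_dvd hp hp0
      omega
    have hdet := det_ne_zero_of_big_ann hann
    set N := Matrix.of fun k j : Fin (n+1) => Matrix.vecMul w (x ^ (k : ℕ)) j with hN
    set g0 := Matrix.of fun k j : Fin (n+1) =>
      Matrix.vecMul w (x ^ (n - (k : ℕ))) j with hg0
    have hsub : g0 = N.submatrix Fin.revPerm id := by
      ext k j
      simp [hg0, hN, Matrix.submatrix, Fin.revPerm, Fin.rev]
    have hdetg0 : g0.det ≠ 0 := by
      rw [hsub, Matrix.det_permute]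
      simp only [ne_eq, mul_eq_zero, not_or]
      refine ⟨?_, hdet⟩
      rcases Int.units_eq_one_or (Equiv.Perm.sign (Fin.revPerm : Equiv.Perm (Fin (n+1)))) with h1 | h1 <;>
        simp [h1]
    obtain ⟨u, hu⟩ := (Matrix.isUnit_iff_isUnit_det g0).mpr (isUnit_iff_ne_zero.mpr hdetg0)
    refine ⟨u, ?_⟩
    rw [dmat_conj x u]
    have hwu : Matrix.vecMul (Pi.single (Fin.last n) 1) (↑u : Matrix (Fin (n+1)) (Fin (n+1)) ℝ)
        = w := by
      rw [hu, Matrix.single_one_vecMul]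
      funext j
      show g0 (Fin.last n) j = w j
      simp [hg0, Fin.last]
    rw [hwu]
    have hinv : ((↑u⁻¹ : Matrix (Fin (n+1)) (Fin (n+1)) ℝ)).det ≠ 0 := by
      have : IsUnit ((↑u⁻¹ : Matrix (Fin (n+1)) (Fin (n+1)) ℝ)).det :=
        (Matrix.isUnit_iff_isUnit_det _).mp u⁻¹.isUnit
      exact this.ne_zero
    exact mul_ne_zero hdet hinv
end

section
/- Let φ : gl(n,ℝ) → ℝ be C¹ and suppose (L_{ij}φ)(x) = 0 for all x whenever 1 ≤ i ≤ n-1 and 1 ≤ j ≤ n (local invariance under the parabolic subalgebra p). Then for every x with D(x) ≠ 0 and every 1 ≤ j ≤ n, (L_{nj}φ)(x) = 0; i.e. φ is locally gl(n,ℝ)-invariant on the open set Ω = {D ≠ 0}. -/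
attribute [local instance] Matrix.frobeniusNormedAddCommGroup Matrix.frobeniusNormedSpace

/-- Derivative of `φ` along the adjoint vector field `x ↦ [E i j, x]`. -/
noncomputable def Lop (n : ℕ) (i j : Fin (n+1))
    (φ : Matrix (Fin (n+1)) (Fin (n+1)) ℝ → ℝ)
    (x : Matrix (Fin (n+1)) (Fin (n+1)) ℝ) : ℝ :=
  deriv (fun t : ℝ => φ (x + t • (Matrix.single i j (1:ℝ) * x
    - x * Matrix.single i j (1:ℝ)))) 0

open Matrix in
lemma Lop_eq_fderiv (n : ℕ) (i j : Fin (n+1))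
    (φ : Matrix (Fin (n+1)) (Fin (n+1)) ℝ → ℝ) (hφ : ContDiff ℝ 1 φ)
    (x : Matrix (Fin (n+1)) (Fin (n+1)) ℝ) :
    Lop n i j φ x = fderiv ℝ φ x
      (Matrix.single i j (1:ℝ) * x - x * Matrix.single i j (1:ℝ)) := by
  set v := Matrix.single i j (1:ℝ) * x - x * Matrix.single i j (1:ℝ) with hv
  have hg : HasDerivAt (fun t : ℝ => x + t • v) v 0 := by
    exact (((hasDerivAt_id (0:ℝ)).smul_const v).const_add x).congr_deriv (one_smul ℝ v)
  have hd : HasDerivAt (fun t : ℝ => φ (x + t • v)) (fderiv ℝ φ x v) 0 := by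
    have hφd : HasFDerivAt φ (fderiv ℝ φ x) (x + (0:ℝ) • v) := by
      rw [zero_smul, add_zero]; exact ((hφ.differentiable one_ne_zero) x).hasFDerivAt
    exact hφd.comp_hasDerivAt 0 hg
  exact hd.deriv

theorem P_invariant_implies_invariant_on_Omega (n : ℕ)
    (φ : Matrix (Fin (n+1)) (Fin (n+1)) ℝ → ℝ) (hφ : ContDiff ℝ 1 φ)
    (hP : ∀ i j : Fin (n+1), i ≠ Fin.last n →
      ∀ x : Matrix (Fin (n+1)) (Fin (n+1)) ℝ, Lop n i j φ x = 0) :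
    ∀ x : Matrix (Fin (n+1)) (Fin (n+1)) ℝ, Dmat n x ≠ 0 →
      ∀ j : Fin (n+1), Lop n (Fin.last n) j φ x = 0 := by
  intro x hD j
  classical
  set f := fderiv ℝ φ x with hf
  set c : Fin (n+1) → ℝ := fun j => Lop n (Fin.last n) j φ x with hc
  set M : Matrix (Fin (n+1)) (Fin (n+1)) ℝ := Matrix.of fun k j : Fin (n+1) =>
    Matrix.vecMul (Pi.single (Fin.last n) 1) (x ^ (k : ℕ)) j with hM
  have hMentry : ∀ k j : Fin (n+1), M k j = (x ^ (k : ℕ)) (Fin.last n) j := by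
    intro k j
    simp [hM, Matrix.vecMul, dotProduct, Pi.single_apply]
  -- key row identities
  have hrow : ∀ k : Fin (n+1), M.mulVec c k = 0 := by
    intro k
    have hcomm : f ((x ^ (k:ℕ)) * x - x * (x ^ (k:ℕ))) = 0 := by
      rw [← pow_succ, ← pow_succ']
      simp
    have hexp : (x ^ (k:ℕ)) * x - x * (x ^ (k:ℕ))
        = ∑ i : Fin (n+1), ∑ l : Fin (n+1), ((x ^ (k:ℕ)) i l) •
            (Matrix.single i l (1:ℝ) * x - x * Matrix.single i l (1:ℝ)) := by
      conv_lhs => rw [Matrix.matrix_eq_sum_single (x ^ (k:ℕ))]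
      rw [Finset.sum_mul, Finset.mul_sum, ← Finset.sum_sub_distrib]
      refine Finset.sum_congr rfl fun i _ => ?_
      rw [Finset.sum_mul, Finset.mul_sum, ← Finset.sum_sub_distrib]
      refine Finset.sum_congr rfl fun l _ => ?_
      rw [smul_sub, ← smul_mul_assoc, ← mul_smul_comm, Matrix.smul_single,
        smul_eq_mul, mul_one]
    have hfsum : f ((x ^ (k:ℕ)) * x - x * (x ^ (k:ℕ)))
        = ∑ i : Fin (n+1), ∑ l : Fin (n+1), ((x ^ (k:ℕ)) i l) * Lop n i l φ x := by
      rw [hexp, map_sum]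
      refine Finset.sum_congr rfl fun i _ => ?_
      rw [map_sum]
      refine Finset.sum_congr rfl fun l _ => ?_
      rw [map_smul, Lop_eq_fderiv n i l φ hφ x, smul_eq_mul, hf]
    have hvanish : ∀ i : Fin (n+1), i ≠ Fin.last n →
        ∑ l : Fin (n+1), ((x ^ (k:ℕ)) i l) * Lop n i l φ x = 0 := by
      intro i hi
      refine Finset.sum_eq_zero fun l _ => ?_
      rw [hP i l hi x, mul_zero]
    have : ∑ l : Fin (n+1), ((x ^ (k:ℕ)) (Fin.last n) l) * Lop n (Fin.last n) l φ x = 0 := by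
      have := hcomm
      rw [hfsum] at this
      rwa [Finset.sum_eq_single (Fin.last n) (fun i _ hi => hvanish i hi)
        (fun h => absurd (Finset.mem_univ _) h)] at this
    simpa [Matrix.mulVec, dotProduct, hMentry, hc] using this
  have hzero : c = 0 := by
    apply Matrix.eq_zero_of_mulVec_eq_zero (show M.det ≠ 0 from hD)
    funext k; exact hrow k
  exact congrFun hzero j
end
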